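/- Fix a sign s ∈ {−1, 1} and real numbers μ ≠ 0, ℓ > 0, α with α ≠ 3/2, and suppose the constraint μ²ℓ²(2α+1)² = (2α−3)² holds. Set A := 4μ²/(2α−3)² and B := s·2μ(1−2α)/(2α−3), and define f, F, G, H : ℝ → ℝ by f(φ) = B·e^{(2α−1)φ}, F(φ) = A·e^{2αφ}, G(φ) = 2(α/ℓ² + μ²(1−2α)(2α²+3α)/(2α−3)²)·e^{2αφ}, H(φ) = −G′(φ). Then for all φ ∈ ℝ: (i) F′(φ) = G(φ); (ii) [dilaton equation] e^{−2αφ}H(φ) − 2(α+1)e^{−2αφ}G(φ) − 2e^{−2αφ}F(φ) + (1/2)e^{(−4α+2)φ}f(φ)² = −6/ℓ²; (iii) [F-equation with c = 0] s·2μ·e^{(−2α+3)φ}f(φ) + e^{2(1−α)φ}H(φ) − 2(α−1)e^{2(1−α)φ}G(φ) + 3e^{4(1−α)φ}f(φ)² = 0; (iv) [Kink equation] (1+2α)A·e^{(2α+1)φ} + (1/2)B²e^{(2α+1)φ} − (2/ℓ²)e^{(2α+1)φ} + (s/(2μ))·B·((1+2α)A − 4α²A − 4α(α−1)A + 2B²)·e^{(2α+1)φ}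 = 0, where (1+2α)A e^{(2α+1)φ} = D²e^{φ} and (1+2α)AB e^{(2α+1)φ} = D²(e^{(−2α+2)φ}f) via the reduction rule D²(W(φ)) = W″F + W′G. -/

import Mathlib

set_option maxHeartbeats 1000000

/-- Case 3 of the paper: `δ = c = k̃ = 0` with
`μ²ℓ²(2α+1)² = (2α−3)²`, the TMG pp-wave. With `A = 4μ²/(2α−3)²`,
`B = s·2μ(1−2α)/(2α−3)`, `f = B e^{(2α−1)φ}`, `|dφ|² = F(φ) = A e^{2αφ}`,
`D²φ = G(φ)`, `R̄ = H(φ) = −G′(φ)`, the consistency relation `F′ = G`, the dilaton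
equation, the F-equation (with `c = 0`) and the Kink equation all hold identically in
`φ`; moreover, via the reduction rule `D²(W(φ)) = W″F + W′G`, one has
`D²e^{φ} = (1+2α)A e^{(2α+1)φ}` and `D²(e^{(−2α+2)φ}f) = (1+2α)AB e^{(2α+1)φ}`. -/

theorem stmt13 (s μ ℓ α A B : ℝ) (hs : s = -1 ∨ s = 1) (hμ : μ ≠ 0) (hℓ : 0 < ℓ)
    (hα : α ≠ 3 / 2)
    (hconstraint : μ ^ 2 * ℓ ^ 2 * (2 * α + 1) ^ 2 = (2 * α - 3) ^ 2)
    (hA : A = 4 * μ ^ 2 / (2 * α - 3) ^ 2)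
    (hB : B = s * 2 * μ * (1 - 2 * α) / (2 * α - 3))
    (f F G H : ℝ → ℝ)
    (hf : ∀ φ : ℝ, f φ = B * Real.exp ((2 * α - 1) * φ))
    (hF : ∀ φ : ℝ, F φ = A * Real.exp (2 * α * φ))
    (hG : ∀ φ : ℝ, G φ =
      2 * (α / ℓ ^ 2 + μ ^ 2 * (1 - 2 * α) * (2 * α ^ 2 + 3 * α) / (2 * α - 3) ^ 2) *
        Real.exp (2 * α * φ))
    (hH : ∀ φ : ℝ, H φ = -deriv G φ) :
    ∀ φ : ℝ,
      deriv F φ = G φ ∧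
      Real.exp (-(2 * α) * φ) * H φ - 2 * (α + 1) * Real.exp (-(2 * α) * φ) * G φ -
          2 * Real.exp (-(2 * α) * φ) * F φ +
          (1 / 2) * Real.exp ((-(4 * α) + 2) * φ) * f φ ^ 2 = -6 / ℓ ^ 2 ∧
      s * 2 * μ * Real.exp ((-(2 * α) + 3) * φ) * f φ +
          Real.exp (2 * (1 - α) * φ) * H φ -
          2 * (α - 1) * Real.exp (2 * (1 - α) * φ) * G φ +
          3 * Real.exp (4 * (1 - α) * φ) * f φ ^ 2 = 0 ∧
      (1 + 2 * α) * A * Real.exp ((2 * α + 1) * φ) +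
          (1 / 2) * B ^ 2 * Real.exp ((2 * α + 1) * φ) -
          (2 / ℓ ^ 2) * Real.exp ((2 * α + 1) * φ) +
          (s / (2 * μ)) * B *
            ((1 + 2 * α) * A - 4 * α ^ 2 * A - 4 * α * (α - 1) * A + 2 * B ^ 2) *
            Real.exp ((2 * α + 1) * φ) = 0 ∧
      deriv (deriv fun y : ℝ => Real.exp y) φ * F φ +
          deriv (fun y : ℝ => Real.exp y) φ * G φ =
        (1 + 2 * α) * A * Real.exp ((2 * α + 1) * φ) ∧
      deriv (deriv fun y : ℝ => Real.exp ((-(2 * α) + 2) * y) * f y) φ * F φ +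
          deriv (fun y : ℝ => Real.exp ((-(2 * α) + 2) * y) * f y) φ * G φ =
        (1 + 2 * α) * A * B * Real.exp ((2 * α + 1) * φ) := by
  have hk : (2 * α - 3) ≠ 0 := fun h => hα (by linarith)
  have hℓ0 : ℓ ≠ 0 := ne_of_gt hℓ
  have h2α1 : 2 * α + 1 ≠ 0 := by
    intro h
    have h0 : (2 * α - 3) ^ 2 = 0 := by rw [← hconstraint, h]; ring
    exact hk (pow_eq_zero_iff (by norm_num) |>.mp h0)
  have hℓ2 : ℓ ^ 2 = (2 * α - 3) ^ 2 / (μ ^ 2 * (2 * α + 1) ^ 2) := by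
    field_simp
    linarith [hconstraint]
  have hexp : ∀ c x : ℝ, HasDerivAt (fun y => Real.exp (c * y)) (c * Real.exp (c * x)) x :=
    fun c x => by
      simpa [mul_comm, Function.comp_def] using (Real.hasDerivAt_exp (c * x)).comp x ((hasDerivAt_id x).const_mul c)
  set Cc := 2 * (α / ℓ ^ 2 + μ ^ 2 * (1 - 2 * α) * (2 * α ^ 2 + 3 * α) / (2 * α - 3) ^ 2)
    with hCc
  have hGfun : G = fun y => Cc * Real.exp (2 * α * y) := funext hG
  have hFfun : F = fun y => A * Real.exp (2 * α * y) := funext hF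
  intro φ
  have hdG : deriv G φ = Cc * (2 * α * Real.exp (2 * α * φ)) := by
    rw [hGfun]; exact ((hexp (2 * α) φ).const_mul Cc).deriv
  have hdF : deriv F φ = A * (2 * α * Real.exp (2 * α * φ)) := by
    rw [hFfun]; exact ((hexp (2 * α) φ).const_mul A).deriv
  have X0 := Real.exp_ne_zero (2 * α * φ)
  have y0 := Real.exp_ne_zero φ
  have E2 : Real.exp (-(2 * α) * φ) = (Real.exp (2 * α * φ))⁻¹ := by
    rw [← Real.exp_neg]; congr 1; ring
  have E3 : Real.exp ((-(4 * α) + 2) * φ) =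
      Real.exp φ * Real.exp φ / (Real.exp (2 * α * φ) * Real.exp (2 * α * φ)) := by
    rw [← Real.exp_add, ← Real.exp_add, ← Real.exp_sub]; congr 1; ring
  have E4 : Real.exp ((2 * α - 1) * φ) = Real.exp (2 * α * φ) / Real.exp φ := by
    rw [← Real.exp_sub]; congr 1; ring
  have E5 : Real.exp ((-(2 * α) + 3) * φ) =
      Real.exp φ * Real.exp φ * Real.exp φ / Real.exp (2 * α * φ) := by
    rw [← Real.exp_add, ← Real.exp_add, ← Real.exp_sub]; congr 1; ring
  have E6 : Real.exp (2 * (1 - α) * φ) = Real.exp φ * Real.exp φ / Real.exp (2 * α * φ) := by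
    rw [← Real.exp_add, ← Real.exp_sub]; congr 1; ring
  have E7 : Real.exp (4 * (1 - α) * φ) =
      Real.exp φ * Real.exp φ * Real.exp φ * Real.exp φ /
        (Real.exp (2 * α * φ) * Real.exp (2 * α * φ)) := by
    rw [← Real.exp_add, ← Real.exp_add, ← Real.exp_add, ← Real.exp_add, ← Real.exp_sub]
    congr 1; ring
  have E8 : Real.exp ((2 * α + 1) * φ) = Real.exp (2 * α * φ) * Real.exp φ := by
    rw [← Real.exp_add]; congr 1; ring
  refine ⟨?_, ?_, ?_, ?_, ?_, ?_⟩
  · -- F' = G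
    rw [hdF, hG, hCc, hA, hℓ2]
    field_simp
    ring
  · -- dilaton equation
    rw [hH, hdG, hG, hF, hf, E2, E3, E4, hCc, hA, hB, hℓ2]
    field_simp
    rcases hs with rfl | rfl <;> ring
  · -- F-equation
    rw [hH, hdG, hG, hf, E4, E5, E6, E7, hCc, hB, hℓ2]
    rcases hs with rfl | rfl <;> (field_simp; ring)
  · -- kink equation
    rw [hA, hB, hℓ2]
    field_simp
    rcases hs with rfl | rfl <;> ring
  · -- D² e^φ
    have hde : (deriv fun y : ℝ => Real.exp y) = Real.exp :=
      funext fun t => (Real.hasDerivAt_exp t).deriv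
    rw [hde, Real.deriv_exp, hF, hG, E8, hCc, hA, hℓ2]
    field_simp
    ring
  · -- D² (e^{(-2α+2)φ} f)
    have h6f : (fun y : ℝ => Real.exp ((-(2 * α) + 2) * y) * f y) = fun y => B * Real.exp y := by
      funext t
      rw [hf t,
        show Real.exp ((-(2 * α) + 2) * t) * (B * Real.exp ((2 * α - 1) * t)) =
          B * (Real.exp ((-(2 * α) + 2) * t) * Real.exp ((2 * α - 1) * t)) from by ring,
        ← Real.exp_add, show (-(2 * α) + 2) * t + (2 * α - 1) * t = t from by ring]
    have hdB : (deriv fun y : ℝ => B * Real.exp y) = fun y => B * Real.exp y :=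
      funext fun t => ((Real.hasDerivAt_exp t).const_mul B).deriv
    rw [h6f, hdB, hdB, hF, hG, E8, hCc, hA, hB, hℓ2]
    field_simp
    rcases hs with rfl | rfl <;> ring
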